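/- Let I ⊆ ℂ[x₀,…,x_{2n−1}] be a radical homogeneous ideal with zero locus Z = Z(I). Assume: (a) for all x ∈ Z and all f, g ∈ I, ∇f(x)ᵀ J ∇g(x) = 0; and (b) there is a subset U ⊆ Z whose vanishing ideal equals I and such that for every x ∈ U the linear span of {∇f(x) : f ∈ I} has dimension n. Suppose q ∈ ℂ^{2n} is a nonzero vector such that Z is a cone with vertex along q, i.e. x + t·q ∈ Z for all x ∈ Z and all t ∈ ℂ. Then the linear polynomial w ↦ ω(w, q) = wᵀJq belongs to I; in particular Z is contained in the hyperplane {w ∈ ℂ^{2n} : ω(w,q) = 0}, so the corresponding projective variety is degenerate (contained in a hyperplane). -/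

import Mathlib

open MvPolynomial Matrix

/-- The standard symplectic matrix `J = (0 Idₙ; −Idₙ 0)`. -/
def Jmat (n : ℕ) : Matrix (Fin (2 * n)) (Fin (2 * n)) ℂ :=
  fun i j => if i.1 + n = j.1 then 1 else if j.1 + n = i.1 then -1 else 0

/-- The zero locus of an ideal of polynomials. -/
def zeroLocus (n : ℕ) (I : Ideal (MvPolynomial (Fin (2 * n)) ℂ)) : Set (Fin (2 * n) → ℂ) :=
  {x | ∀ f ∈ I, eval x f = 0}

/-- The gradient of a polynomial at a point. -/
noncomputable def gradAt (n : ℕ) (f : MvPolynomial (Fin (2 * n)) ℂ) (x : Fin (2 * n) → ℂ) :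
    Fin (2 * n) → ℂ :=
  fun i => eval x (pderiv i f)

lemma Jmat_transpose (n : ℕ) : (Jmat n)ᵀ = -(Jmat n) := by
  ext i j
  have hi := i.isLt; have hj := j.isLt
  simp only [Matrix.transpose_apply, Matrix.neg_apply, Jmat]
  split_ifs <;> first | (exfalso; omega) | norm_num

lemma Jmat_sq (n : ℕ) : Jmat n * Jmat n = -1 := by
  ext i j
  have hi := i.isLt; have hj := j.isLt
  rw [Matrix.mul_apply]
  rcases lt_or_ge (i : ℕ) n with h | h
  · have hin : (i : ℕ) + n < 2 * n := by omega
    rw [Finset.sum_eq_single (⟨(i : ℕ) + n, hin⟩ : Fin (2 * n))]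
    · simp only [Jmat, Matrix.neg_apply, Matrix.one_apply, Fin.ext_iff]
      split_ifs <;> first | (exfalso; omega) | norm_num
    · intro b _ hb
      have hb' : (b : ℕ) ≠ (i : ℕ) + n := fun hc => hb (Fin.ext hc)
      have hbl := b.isLt
      simp only [Jmat]
      split_ifs <;> first | (exfalso; omega) | norm_num
    · intro hmem; exact absurd (Finset.mem_univ _) hmem
  · have hin : (i : ℕ) - n < 2 * n := by omega
    rw [Finset.sum_eq_single (⟨(i : ℕ) - n, hin⟩ : Fin (2 * n))]
    · simp only [Jmat, Matrix.neg_apply, Matrix.one_apply, Fin.ext_iff]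
      split_ifs <;> first | (exfalso; omega) | norm_num
    · intro b _ hb
      have hb' : (b : ℕ) ≠ (i : ℕ) - n := fun hc => hb (Fin.ext hc)
      have hbl := b.isLt
      simp only [Jmat]
      split_ifs <;> first | (exfalso; omega) | norm_num
    · intro hmem; exact absurd (Finset.mem_univ _) hmem

lemma aeval_line_coeff {σ : Type*} [Fintype σ] [DecidableEq σ] (x v : σ → ℂ)
    (f : MvPolynomial σ ℂ) :
    (MvPolynomial.aeval (fun i => Polynomial.C (x i) + Polynomial.C (v i) * Polynomial.X) f).coeff 0
        = eval x f ∧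
    (MvPolynomial.aeval (fun i => Polynomial.C (x i) + Polynomial.C (v i) * Polynomial.X) f).coeff 1
        = ∑ i, v i * eval x (pderiv i f) := by
  induction f using MvPolynomial.induction_on with
  | C a => simp
  | add p q hp hq =>
      simp [hp.1, hp.2, hq.1, hq.2, mul_add, Finset.sum_add_distrib]
  | mul_X p i hp =>
      rw [_root_.map_mul, aeval_X]
      constructor
      · rw [Polynomial.mul_coeff_zero]
        simp [hp.1]
      · rw [mul_add, Polynomial.coeff_add, Polynomial.coeff_mul_C, ← mul_assoc,
          Polynomial.coeff_mul_X, Polynomial.coeff_mul_C, hp.1, hp.2]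
        have key : ∀ j : σ, v j * eval x (pderiv j (p * X i))
            = v j * eval x (pderiv j p) * x i + (if j = i then eval x p * v j else 0) := by
          intro j
          rw [pderiv_mul, pderiv_X]
          rcases eq_or_ne j i with rfl | hji
          · simp [Pi.single_apply]; ring
          · simp [Pi.single_apply, hji, Ne.symm hji]; ring
        rw [Finset.sum_congr rfl fun j _ => key j, Finset.sum_add_distrib,
          Finset.sum_ite_eq' Finset.univ i (fun j => eval x p * v j), if_pos (Finset.mem_univ i),
          ← Finset.sum_mul]

lemma dirDeriv_eq_zero {σ : Type*} [Fintype σ] [DecidableEq σ] (x v : σ → ℂ)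
    (f : MvPolynomial σ ℂ) (h : ∀ t : ℂ, eval (x + t • v) f = 0) :
    ∑ i, v i * eval x (pderiv i f) = 0 := by
  have hz : (MvPolynomial.aeval
      (fun i => Polynomial.C (x i) + Polynomial.C (v i) * Polynomial.X) f) = 0 := by
    apply Polynomial.funext
    intro t
    have h1 : Polynomial.eval t (MvPolynomial.aeval
        (fun i => Polynomial.C (x i) + Polynomial.C (v i) * Polynomial.X) f)
        = eval (x + t • v) f := by
      rw [MvPolynomial.aeval_def]
      show (Polynomial.evalRingHom t) (eval₂ _ _ f) = _
      rw [MvPolynomial.eval₂_comp_left (Polynomial.evalRingHom t)]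
      have h2 : (Polynomial.evalRingHom t).comp (algebraMap ℂ (Polynomial ℂ)) = RingHom.id ℂ := by
        refine RingHom.ext fun a => ?_
        rw [RingHom.comp_apply, Polynomial.algebraMap_eq]
        rw [Polynomial.coe_evalRingHom, Polynomial.eval_C, RingHom.id_apply]
      have h3 : ⇑(Polynomial.evalRingHom t) ∘
          (fun i => Polynomial.C (x i) + Polynomial.C (v i) * Polynomial.X) = x + t • v := by
        funext i
        simp only [Function.comp_apply, Polynomial.coe_evalRingHom, Polynomial.eval_add,
          Polynomial.eval_mul, Polynomial.eval_C, Polynomial.eval_X, Pi.add_apply,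
          Pi.smul_apply, smul_eq_mul]
        ring
      rw [h2, h3]
      rfl
    rw [h1, h t, Polynomial.eval_zero]
  have := (aeval_line_coeff x v f).2
  rw [hz, Polynomial.coeff_zero] at this
  exact this.symm

lemma eval_smul_homog {σ : Type*} [Fintype σ] {f : MvPolynomial σ ℂ} {d : ℕ}
    (hf : f.IsHomogeneous d) (c : ℂ) (x : σ → ℂ) :
    eval (c • x) f = c ^ d * eval x f := by
  rw [eval_eq, eval_eq, Finset.mul_sum]
  refine Finset.sum_congr rfl fun m hm => ?_
  have hd := hf (MvPolynomial.mem_support_iff.1 hm)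
  simp only [Pi.smul_apply, smul_eq_mul, mul_pow]
  rw [Finset.prod_mul_distrib, Finset.prod_pow_eq_pow_sum]
  have hsum : ∑ i ∈ m.support, m i = d := by
    rw [← hd]
    simp [Finsupp.weight_apply, Finsupp.sum]
  rw [hsum]
  ring

/-- If the zero locus `Z` of a radical homogeneous ideal `I` has isotropic conormal spaces,
the conormal space has dimension `n` on a subset `U` whose vanishing ideal is `I`, and `Z`
is a cone with vertex along a nonzero vector `q`, then the linear form `w ↦ ω(w,q)` lies in
`I`; in particular `Z` lies in the hyperplane `{w : ω(w,q) = 0}` (the variety is degenerate). -/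
theorem legendrian_cone_is_degenerate (n : ℕ) (hn : 1 ≤ n)
    (I : Ideal (MvPolynomial (Fin (2 * n)) ℂ)) (hrad : I.IsRadical)
    (hhom : ∃ S : Set (MvPolynomial (Fin (2 * n)) ℂ),
      (∀ f ∈ S, ∃ d : ℕ, f.IsHomogeneous d) ∧ I = Ideal.span S)
    (hiso : ∀ x ∈ zeroLocus n I, ∀ f ∈ I, ∀ g ∈ I,
      gradAt n f x ⬝ᵥ (Jmat n).mulVec (gradAt n g x) = 0)
    (U : Set (Fin (2 * n) → ℂ)) (hUZ : U ⊆ zeroLocus n I)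
    (hUI : ∀ f : MvPolynomial (Fin (2 * n)) ℂ, (∀ x ∈ U, eval x f = 0) ↔ f ∈ I)
    (hUrank : ∀ x ∈ U, Module.finrank ℂ
      (Submodule.span ℂ {v : Fin (2 * n) → ℂ | ∃ f ∈ I, v = gradAt n f x}) = n)
    (q : Fin (2 * n) → ℂ) (hq : q ≠ 0)
    (hcone : ∀ x ∈ zeroLocus n I, ∀ t : ℂ, x + t • q ∈ zeroLocus n I) :
    (∑ i : Fin (2 * n), C (((Jmat n).mulVec q) i) * X i) ∈ I ∧
      ∀ x ∈ zeroLocus n I, x ⬝ᵥ (Jmat n).mulVec q = 0 := by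
  classical
  obtain ⟨S, hShom, hIS⟩ := hhom
  -- scaling: Z is a cone through the origin
  have hscale : ∀ x ∈ zeroLocus n I, ∀ s : ℂ, s • x ∈ zeroLocus n I := by
    intro x hx s f hf
    rw [hIS] at hf
    refine Submodule.span_induction (p := fun f _ => eval (s • x) f = 0) ?_ ?_ ?_ ?_ hf
    · intro g hg
      obtain ⟨d, hd⟩ := hShom g hg
      rw [eval_smul_homog hd]
      have hg0 : eval x g = 0 := hx g (by rw [hIS]; exact Ideal.subset_span hg)
      rw [hg0, mul_zero]
    · simp
    · intro a b _ _ ha hb; rw [map_add, ha, hb, add_zero]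
    · intro a b _ hb; rw [smul_eq_mul, _root_.map_mul, hb, mul_zero]
  -- the key fact
  have key : ∀ x ∈ U, x ⬝ᵥ (Jmat n).mulVec q = 0 := by
    intro x hxU
    have hxZ : x ∈ zeroLocus n I := hUZ hxU
    set J := Jmat n with hJ
    set B : LinearMap.BilinForm ℂ (Fin (2 * n) → ℂ) := Matrix.toBilin' J with hB
    have hBapp : ∀ u w, B u w = u ⬝ᵥ J.mulVec w := fun u w => Matrix.toBilin'_apply' J u w
    have hJJ : J * J = -1 := Jmat_sq n
    have hJt : Jᵀ = -J := Jmat_transpose n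
    -- B is alternating, hence reflexive
    have hAlt : B.IsAlt := by
      intro u
      have h1 : B u u = (-(J.mulVec u)) ⬝ᵥ u := by
        rw [hBapp, dotProduct_mulVec]
        congr 1
        have : J = -(Jᵀ) := by rw [hJt, neg_neg]
        conv_lhs => rw [this]
        rw [Matrix.vecMul_neg, Matrix.vecMul_transpose]
      have h2 : B u u = -(B u u) := by
        conv_lhs => rw [h1, neg_dotProduct, dotProduct_comm, ← hBapp]
      linear_combination h2 / 2
    have hRefl : B.IsRefl := hAlt.isRefl
    -- B is nondegenerate
    have hNd : B.Nondegenerate := by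
      apply Matrix.Nondegenerate.toBilin'
      refine Matrix.nondegenerate_def.2 ⟨fun v hv => ?_, fun w hw => ?_⟩
      have h0 : Matrix.vecMul v J = 0 := by
        funext j
        have := hv (Pi.single j 1)
        rw [dotProduct_mulVec, dotProduct_single, mul_one] at this
        exact this
      have h1 : Matrix.vecMul (Matrix.vecMul v J) J = -v := by
        rw [Matrix.vecMul_vecMul, hJJ, Matrix.vecMul_neg, Matrix.vecMul_one]
      rw [h0, Matrix.zero_vecMul] at h1
      exact neg_eq_zero.mp h1.symm
      have h0 : J *ᵥ w = 0 := by
        funext j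
        have := hw (Pi.single j 1)
        rwa [single_dotProduct, one_mul] at this
      have h1 : J *ᵥ (J *ᵥ w) = -w := by
        rw [Matrix.mulVec_mulVec, hJJ, Matrix.neg_mulVec, Matrix.one_mulVec]
      rw [h0, Matrix.mulVec_zero] at h1
      exact neg_eq_zero.mp h1.symm
    set N : Submodule ℂ (Fin (2 * n) → ℂ) :=
      Submodule.span ℂ {v : Fin (2 * n) → ℂ | ∃ f ∈ I, v = gradAt n f x} with hN
    -- gradients pair to zero with q
    have hgq : ∀ f ∈ I, gradAt n f x ⬝ᵥ q = 0 := by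
      intro f hf
      have := dirDeriv_eq_zero x q f (fun t => (hcone x hxZ t) f hf)
      rw [← this]
      simp only [dotProduct, gradAt]
      exact Finset.sum_congr rfl fun i _ => mul_comm _ _
    -- gradients pair to zero with x
    have hgx : ∀ f ∈ I, gradAt n f x ⬝ᵥ x = 0 := by
      intro f hf
      have hline : ∀ t : ℂ, eval (x + t • x) f = 0 := by
        intro t
        have hx2 : x + t • x = (1 + t) • x := by rw [add_smul, one_smul]
        rw [hx2]
        exact hscale x hxZ (1 + t) f hf
      have := dirDeriv_eq_zero x x f hline
      rw [← this]
      simp only [dotProduct, gradAt]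
      exact Finset.sum_congr rfl fun i _ => mul_comm _ _
    -- extend to the span
    have hNq : ∀ u ∈ N, u ⬝ᵥ q = 0 := by
      intro u hu
      refine Submodule.span_induction (p := fun u _ => u ⬝ᵥ q = 0) ?_ ?_ ?_ ?_ hu
      · rintro v ⟨f, hf, rfl⟩; exact hgq f hf
      · exact zero_dotProduct q
      · intro a b _ _ ha hb; rw [add_dotProduct, ha, hb, add_zero]
      · intro c a _ ha; rw [smul_dotProduct, ha, smul_zero]
    have hNx : ∀ u ∈ N, x ⬝ᵥ u = 0 := by
      intro u hu
      refine Submodule.span_induction (p := fun u _ => x ⬝ᵥ u = 0) ?_ ?_ ?_ ?_ hu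
      · rintro v ⟨f, hf, rfl⟩; rw [dotProduct_comm]; exact hgx f hf
      · exact dotProduct_zero x
      · intro a b _ _ ha hb; rw [dotProduct_add, ha, hb, add_zero]
      · intro c a _ ha; rw [dotProduct_smul, ha, smul_zero]
    -- N is isotropic
    have hNN : ∀ u ∈ N, ∀ w ∈ N, B u w = 0 := by
      intro u hu w hw
      have h1 : ∀ w ∈ N, ∀ f ∈ I, B (gradAt n f x) w = 0 := by
        intro w hw f hf
        refine Submodule.span_induction (p := fun w _ => B (gradAt n f x) w = 0) ?_ ?_ ?_ ?_ hw
        · rintro v ⟨g, hg, rfl⟩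
          rw [hBapp]; exact hiso x hxZ f hf g hg
        · simp
        · intro a b _ _ ha hb; rw [map_add, ha, hb, add_zero]
        · intro c a _ ha; rw [LinearMap.map_smul, ha, smul_zero]
      refine Submodule.span_induction (p := fun u _ => B u w = 0) ?_ ?_ ?_ ?_ hu
      · rintro v ⟨f, hf, rfl⟩; exact h1 w hw f hf
      · simp
      · intro a b _ _ ha hb; rw [map_add, LinearMap.add_apply, ha, hb, add_zero]
      · intro c a _ ha; rw [LinearMap.map_smul, LinearMap.smul_apply, ha, smul_zero]
    -- N is contained in its orthogonal complement
    have hle : N ≤ B.orthogonal N := by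
      intro w hw
      rw [LinearMap.BilinForm.mem_orthogonal_iff]
      intro u hu
      exact hNN u hu w hw
    -- dimensions
    have hdim : Module.finrank ℂ N = n := hUrank x hxU
    have hdimO : Module.finrank ℂ (B.orthogonal N) = n := by
      rw [LinearMap.BilinForm.finrank_orthogonal hNd, Module.finrank_fin_fun, hdim]
      omega
    have hNeq : N = B.orthogonal N :=
      Submodule.eq_of_le_of_finrank_le hle (by rw [hdim, hdimO])
    -- J q lies in the orthogonal complement, hence in N
    have hJqO : J.mulVec q ∈ B.orthogonal N := by
      rw [LinearMap.BilinForm.mem_orthogonal_iff]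
      intro u hu
      show B u (J.mulVec q) = 0
      rw [hBapp, Matrix.mulVec_mulVec, hJJ, Matrix.neg_mulVec, Matrix.one_mulVec,
        dotProduct_neg, hNq u hu, neg_zero]
    have hJqN : J.mulVec q ∈ N := by rw [hNeq]; exact hJqO
    exact hNx (J.mulVec q) hJqN
  -- conclude
  have hmem : (∑ i : Fin (2 * n), C (((Jmat n).mulVec q) i) * X i) ∈ I := by
    rw [← hUI]
    intro x hx
    have := key x hx
    simp only [map_sum, _root_.map_mul, eval_C, eval_X]
    rw [← this]
    simp only [dotProduct]
    exact Finset.sum_congr rfl fun i _ => mul_comm _ _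
  refine ⟨hmem, fun x hxZ => ?_⟩
  have h0 := hxZ _ hmem
  simp only [map_sum, _root_.map_mul, eval_C, eval_X] at h0
  rw [← h0]
  simp only [dotProduct]
  exact Finset.sum_congr rfl fun i _ => mul_comm _ _
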